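/- Let q be an odd prime power, m = (q+1)/2, and let γ ∈ F_q be nonzero such that f(x) = γ^{-1}x^m + x is a bijection of F_q. If (γ+1)/γ is a square in F_q, then h(x) = x^m - γx satisfies h(f(x)) = ((1-γ^2)/γ)·x for all x ∈ F_q; if (γ+1)/γ is not a square in F_q, then h(x) = x^m + γx satisfies h(f(x)) = ((γ^2-1)/γ)·x for all x ∈ F_q. -/
import Mathlib

/-- Let `q` be an odd prime power, `m = (q+1)/2`, and `γ ∈ F_q` nonzero
such that `f(x) = γ⁻¹x^m + x` is a bijection of `F_q`. If `(γ+1)/γ` is a square then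
`h(x) = x^m - γx` satisfies `h(f(x)) = ((1-γ^2)/γ)·x` for all `x`; if `(γ+1)/γ` is not
a square then `h(x) = x^m + γx` satisfies `h(f(x)) = ((γ^2-1)/γ)·x` for all `x`. -/
theorem stmt_8 (q : ℕ) (hq : IsPrimePow q) (hodd : Odd q)
    (F : Type) [Field F] [Fintype F] (hF : Fintype.card F = q)
    (m : ℕ) (hm : 2 * m = q + 1)
    (γ : F) (hγ0 : γ ≠ 0)
    (hperm : Function.Bijective (fun x : F => γ⁻¹ * x ^ m + x)) :
    ((∃ c : F, c ^ 2 = (γ + 1) / γ) →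
        ∀ x : F, (γ⁻¹ * x ^ m + x) ^ m - γ * (γ⁻¹ * x ^ m + x)
          = ((1 - γ ^ 2) / γ) * x)
    ∧ ((¬ ∃ c : F, c ^ 2 = (γ + 1) / γ) →
        ∀ x : F, (γ⁻¹ * x ^ m + x) ^ m + γ * (γ⁻¹ * x ^ m + x)
          = ((γ ^ 2 - 1) / γ) * x) := by
  have hq2 : 2 ≤ q := hq.two_le
  have hq3 : 3 ≤ q := by
    rcases hodd with ⟨k, hk⟩; omega
  set n := m - 1 with hn
  have hmn : m = n + 1 := by omega
  have h2n : 2 * n = q - 1 := by omega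
  have hn1 : 1 ≤ n := by omega
  have hchar : ringChar F ≠ 2 := by
    intro h
    have := FiniteField.even_card_iff_char_two.mp h
    rw [hF] at this
    rcases hodd with ⟨k, hk⟩; omega
  have h2z : (2 : F) ≠ 0 := Ring.two_ne_zero hchar
  have hne : (-1 : F) ≠ 1 := by
    intro h
    apply h2z
    linear_combination -h
  -- basic power facts
  have hpow1 : ∀ x : F, x ≠ 0 → x ^ (2 * n) = 1 := by
    intro x hx
    have := FiniteField.pow_card_sub_one_eq_one x hx
    rwa [hF, ← h2n] at this
  have key : ∀ x : F, x ≠ 0 → x ^ n = 1 ∨ x ^ n = -1 := by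
    intro x hx
    have h1 : x ^ n * x ^ n = 1 := by rw [← pow_add]; rw [show n + n = 2 * n by ring]; exact hpow1 x hx
    exact mul_self_eq_one_iff.mp h1
  have hmp : ∀ x : F, x ^ m = x ^ n * x := by intro x; rw [hmn, pow_succ]
  have hcard2 : Fintype.card F / 2 = n := by rw [hF]; omega
  have hsq_iff : ∀ a : F, a ≠ 0 → (IsSquare a ↔ a ^ n = 1) := by
    intro a ha
    rw [← hcard2]; exact FiniteField.isSquare_iff hchar ha
  -- f 0 = 0
  have hf0 : γ⁻¹ * (0 : F) ^ m + 0 = 0 := by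
    rw [zero_pow (by omega : m ≠ 0)]; ring
  -- γ ≠ -1
  have hγm1 : γ ≠ -1 := by
    intro h
    have h1 : γ⁻¹ * (1 : F) ^ m + 1 = 0 := by rw [h]; norm_num
    have := hperm.1 (h1.trans hf0.symm)
    exact one_ne_zero this
  -- γ ≠ 1 (using a nonsquare u)
  obtain ⟨u, hu⟩ := FiniteField.exists_nonsquare hchar
  have hu0 : u ≠ 0 := by rintro rfl; exact hu (by exact ⟨0, by ring⟩)
  have hun : u ^ n = -1 := by
    rcases key u hu0 with h | h
    · exact absurd ((hsq_iff u hu0).mpr h) hu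
    · exact h
  have hγ1 : γ ≠ 1 := by
    intro h
    have h1 : γ⁻¹ * u ^ m + u = 0 := by rw [h, hmp, hun]; ring
    have := hperm.1 (h1.trans hf0.symm)
    rw [this, zero_pow (by omega : n ≠ 0)] at hun
    exact (by norm_num : (0:F) ≠ -1) hun
  have hp0 : (γ + 1) / γ ≠ 0 := by
    intro h
    rcases div_eq_zero_iff.mp h with h | h
    · exact hγm1 (by linear_combination h)
    · exact hγ0 h
  have hm0 : (γ - 1) / γ ≠ 0 := by
    intro h
    rcases div_eq_zero_iff.mp h with h | h
    · exact hγ1 (by linear_combination h)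
    · exact hγ0 h
  -- value of f on square/nonsquare classes
  have hfx1 : ∀ x : F, x ^ n = 1 → γ⁻¹ * x ^ m + x = ((γ + 1) / γ) * x := by
    intro x hx; rw [hmp, hx]; field_simp; ring
  have hfx2 : ∀ x : F, x ^ n = -1 → γ⁻¹ * x ^ m + x = ((γ - 1) / γ) * x := by
    intro x hx; rw [hmp, hx]; field_simp; ring
  constructor
  · rintro ⟨c, hc⟩ x
    have hc0 : c ≠ 0 := by rintro rfl; rw [zero_pow two_ne_zero] at hc; exact hp0 hc.symm
    have a1 : ((γ + 1) / γ) ^ n = 1 := by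
      rw [← hc, ← pow_mul]; exact hpow1 c hc0
    have a2 : ((γ - 1) / γ) ^ n = 1 := by
      rcases key _ hm0 with h | h
      · exact h
      exfalso
      obtain ⟨y, hy⟩ := hperm.2 u
      simp only at hy
      have hy0 : y ≠ 0 := by rintro rfl; rw [hf0] at hy; exact hu0 hy.symm
      rcases key y hy0 with hyn | hyn
      · rw [hfx1 y hyn] at hy
        have : u ^ n = 1 := by rw [← hy, mul_pow, a1, hyn]; ring
        rw [hun] at this; exact hne this
      · rw [hfx2 y hyn] at hy
        have : u ^ n = 1 := by rw [← hy, mul_pow, h, hyn]; ring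
        rw [hun] at this; exact hne this
    by_cases hx0 : x = 0
    · subst hx0; rw [hf0, zero_pow (by omega : m ≠ 0)]; ring
    rcases key x hx0 with hxn | hxn
    · rw [hfx1 x hxn, hmp, mul_pow, a1, hxn]
      field_simp; ring
    · rw [hfx2 x hxn, hmp, mul_pow, a2, hxn]
      field_simp; ring
  · intro hns x
    have a1 : ((γ + 1) / γ) ^ n = -1 := by
      rcases key _ hp0 with h | h
      · exfalso
        obtain ⟨r, hr⟩ := (hsq_iff _ hp0).mpr h
        exact hns ⟨r, by rw [hr]; ring⟩
      · exact h
    have a2 : ((γ - 1) / γ) ^ n = -1 := by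
      rcases key _ hm0 with h | h
      swap
      · exact h
      exfalso
      obtain ⟨y, hy⟩ := hperm.2 1
      simp only at hy
      have hy0 : y ≠ 0 := by rintro rfl; rw [hf0] at hy; exact one_ne_zero hy.symm
      rcases key y hy0 with hyn | hyn
      · rw [hfx1 y hyn] at hy
        have h1 : ((γ + 1) / γ * y) ^ n = -1 := by rw [mul_pow, a1, hyn]; ring
        rw [hy, one_pow] at h1; exact hne h1.symm
      · rw [hfx2 y hyn] at hy
        have h1 : ((γ - 1) / γ * y) ^ n = -1 := by rw [mul_pow, h, hyn]; ring
        rw [hy, one_pow] at h1; exact hne h1.symm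
    by_cases hx0 : x = 0
    · subst hx0; rw [hf0, zero_pow (by omega : m ≠ 0)]; ring
    rcases key x hx0 with hxn | hxn
    · rw [hfx1 x hxn, hmp, mul_pow, a1, hxn]
      field_simp; ring
    · rw [hfx2 x hxn, hmp, mul_pow, a2, hxn]
      field_simp; ring
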